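/- Under the setup and curvature-one condition described in the context, let v1 ∈ σ1 and v2 ∈ σ2 be unit vectors and let a,b ∈ ℝ with a² + b² = 1. Then the unit vector v = a·v1 + b·v2 satisfies R(v, Av, Av, v)/‖Av‖² = a²·λ1 + b²·λ2. -/

import Mathlib

open scoped RealInnerProductSpace

set_option maxHeartbeats 1000000

/-- In the two-invariant-planes setup with the curvature-one condition on
`W = σ1 ⊕ σ2`, a unit vector `v = a·v1 + b·v2` (with `v1 ∈ σ1`, `v2 ∈ σ2` unit and
`a² + b² = 1`) satisfies `λ(v) = R(v,Av,Av,v)/‖Av‖² = a²λ1 + b²λ2`. -/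
theorem stmt_7
    {V : Type*} [NormedAddCommGroup V] [InnerProductSpace ℝ V] [FiniteDimensional ℝ V]
    (R : V →ₗ[ℝ] V →ₗ[ℝ] V →ₗ[ℝ] V →ₗ[ℝ] ℝ)
    (hskew : ∀ X Y Z W : V, R X Y Z W = - R Y X Z W)
    (hpair : ∀ X Y Z W : V, R X Y Z W = R Z W X Y)
    (σ1 σ2 : Submodule ℝ V)
    (hσ1 : Module.finrank ℝ σ1 = 2) (hσ2 : Module.finrank ℝ σ2 = 2)
    (horth : ∀ x ∈ σ1, ∀ y ∈ σ2, ⟪x, y⟫ = 0)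
    (A : V →ₗ[ℝ] V)
    (hAskew : ∀ x y : V, ⟪A x, y⟫ = -⟪x, A y⟫)
    (hA1 : Submodule.map A σ1 = σ1) (hA2 : Submodule.map A σ2 = σ2)
    (μ1 μ2 : ℝ) (hμ1 : 0 < μ1) (hμ2 : 0 < μ2)
    (hAμ1 : ∀ x ∈ σ1, ‖A x‖ = μ1 * ‖x‖) (hAμ2 : ∀ x ∈ σ2, ‖A x‖ = μ2 * ‖x‖)
    (lam1 lam2 : ℝ)
    (hlam1 : ∀ x ∈ σ1, ‖x‖ = 1 → R x (A x) (A x) x = lam1 * μ1 ^ 2)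
    (hlam2 : ∀ x ∈ σ2, ‖x‖ = 1 → R x (A x) (A x) x = lam2 * μ2 ^ 2)
    (hcvc : ∀ v ∈ σ1 ⊔ σ2, ‖v‖ = 1 → ∀ w ∈ σ1 ⊔ σ2, ⟪w, v⟫ = 0 → ⟪w, A v⟫ = 0 →
      ∀ u ∈ σ1 ⊔ σ2, R w v v u = ⟪w, u⟫)
    (v1 : V) (hv1 : v1 ∈ σ1) (hv1u : ‖v1‖ = 1)
    (v2 : V) (hv2 : v2 ∈ σ2) (hv2u : ‖v2‖ = 1)
    (a b : ℝ) (hab : a ^ 2 + b ^ 2 = 1) :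
    R (a • v1 + b • v2) (A (a • v1 + b • v2)) (A (a • v1 + b • v2)) (a • v1 + b • v2)
        / ‖A (a • v1 + b • v2)‖ ^ 2
      = a ^ 2 * lam1 + b ^ 2 * lam2 := by
  -- memberships
  have hw1mem : A v1 ∈ σ1 := by rw [← hA1]; exact Submodule.mem_map_of_mem hv1
  have hw2mem : A v2 ∈ σ2 := by rw [← hA2]; exact Submodule.mem_map_of_mem hv2
  have hAw1mem : A (A v1) ∈ σ1 := by rw [← hA1]; exact Submodule.mem_map_of_mem hw1mem
  have hAw2mem : A (A v2) ∈ σ2 := by rw [← hA2]; exact Submodule.mem_map_of_mem hw2mem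
  have horth' : ∀ y ∈ σ2, ∀ x ∈ σ1, ⟪y, x⟫ = 0 := fun y hy x hx => by
    rw [real_inner_comm]; exact horth x hx y hy
  have Wv1 : v1 ∈ σ1 ⊔ σ2 := Submodule.mem_sup_left hv1
  have Wv2 : v2 ∈ σ1 ⊔ σ2 := Submodule.mem_sup_right hv2
  have Ww1 : A v1 ∈ σ1 ⊔ σ2 := Submodule.mem_sup_left hw1mem
  have Ww2 : A v2 ∈ σ1 ⊔ σ2 := Submodule.mem_sup_right hw2mem
  -- inner product values
  have iv1v1 : ⟪v1, v1⟫ = (1:ℝ) := by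
    rw [real_inner_self_eq_norm_sq, hv1u]; norm_num
  have iv2v2 : ⟪v2, v2⟫ = (1:ℝ) := by
    rw [real_inner_self_eq_norm_sq, hv2u]; norm_num
  have iv1v2 : ⟪v1, v2⟫ = (0:ℝ) := horth v1 hv1 v2 hv2
  have iv2v1 : ⟪v2, v1⟫ = (0:ℝ) := horth' v2 hv2 v1 hv1
  have iv1w1 : ⟪v1, A v1⟫ = (0:ℝ) := by
    have h := hAskew v1 v1
    have h2 := real_inner_comm v1 (A v1)
    linarith
  have iw1v1 : ⟪A v1, v1⟫ = (0:ℝ) := by rw [real_inner_comm]; exact iv1w1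
  have iv2w2 : ⟪v2, A v2⟫ = (0:ℝ) := by
    have h := hAskew v2 v2
    have h2 := real_inner_comm v2 (A v2)
    linarith
  have iw2v2 : ⟪A v2, v2⟫ = (0:ℝ) := by rw [real_inner_comm]; exact iv2w2
  have iv1w2 : ⟪v1, A v2⟫ = (0:ℝ) := horth v1 hv1 _ hw2mem
  have iw2v1 : ⟪A v2, v1⟫ = (0:ℝ) := horth' _ hw2mem v1 hv1
  have iv2w1 : ⟪v2, A v1⟫ = (0:ℝ) := horth' v2 hv2 _ hw1mem
  have iw1v2 : ⟪A v1, v2⟫ = (0:ℝ) := horth _ hw1mem v2 hv2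
  have iw1w2 : ⟪A v1, A v2⟫ = (0:ℝ) := horth _ hw1mem _ hw2mem
  have iw2w1 : ⟪A v2, A v1⟫ = (0:ℝ) := horth' _ hw2mem _ hw1mem
  have nw1 : ‖A v1‖ = μ1 := by rw [hAμ1 v1 hv1, hv1u, mul_one]
  have nw2 : ‖A v2‖ = μ2 := by rw [hAμ2 v2 hv2, hv2u, mul_one]
  have iw1w1 : ⟪A v1, A v1⟫ = μ1 ^ 2 := by rw [real_inner_self_eq_norm_sq, nw1]
  have iw2w2 : ⟪A v2, A v2⟫ = μ2 ^ 2 := by rw [real_inner_self_eq_norm_sq, nw2]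
  -- curvature symmetries
  have hlast : ∀ X Y Z W : V, R X Y Z W = - R X Y W Z := by
    intro X Y Z W
    calc R X Y Z W = R Z W X Y := hpair _ _ _ _
      _ = -R W Z X Y := hskew _ _ _ _
      _ = -R X Y W Z := by rw [hpair W Z X Y]
  have hswap : ∀ X Y Z W : V, R X Y Z W = R W Z Y X := by
    intro X Y Z W
    calc R X Y Z W = -R Y X Z W := hskew _ _ _ _
      _ = -R Z W Y X := by rw [hpair Y X Z W]
      _ = R W Z Y X := by rw [hskew Z W Y X, neg_neg]
  have hflip : ∀ X Y Z W : V, R X Y Z W = R Y X W Z := by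
    intro X Y Z W
    rw [hskew X Y Z W, hlast Y X Z W, neg_neg]
  -- curvature-one instances
  have I1 : ∀ w ∈ σ2, ∀ u ∈ σ1 ⊔ σ2, R w v1 v1 u = ⟪w, u⟫ := by
    intro w hw u hu
    exact hcvc v1 Wv1 hv1u w (Submodule.mem_sup_right hw)
      (horth' w hw v1 hv1) (horth' w hw _ hw1mem) u hu
  have I3 : ∀ w ∈ σ1, ∀ u ∈ σ1 ⊔ σ2, R w v2 v2 u = ⟪w, u⟫ := by
    intro w hw u hu
    exact hcvc v2 Wv2 hv2u w (Submodule.mem_sup_left hw)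
      (horth w hw v2 hv2) (horth w hw _ hw2mem) u hu
  have I2 : ∀ w ∈ σ2, ∀ u ∈ σ1 ⊔ σ2, R w (A v1) (A v1) u = μ1 ^ 2 * ⟪w, u⟫ := by
    intro w hw u hu
    have hvnorm : ‖(μ1⁻¹) • A v1‖ = 1 := by
      rw [norm_smul, nw1, norm_inv, Real.norm_eq_abs, abs_of_pos hμ1]
      field_simp
    have h := hcvc ((μ1⁻¹) • A v1) (Submodule.smul_mem _ _ Ww1) hvnorm
      w (Submodule.mem_sup_right hw)
      (by rw [real_inner_smul_right, horth' w hw _ hw1mem, mul_zero])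
      (by rw [map_smul, real_inner_smul_right, horth' w hw _ hAw1mem, mul_zero])
      u hu
    simp only [map_smul, LinearMap.smul_apply, smul_eq_mul] at h
    have hμ1' : μ1 ≠ 0 := hμ1.ne'
    field_simp at h
    linear_combination h
  have I4 : ∀ w ∈ σ1, ∀ u ∈ σ1 ⊔ σ2, R w (A v2) (A v2) u = μ2 ^ 2 * ⟪w, u⟫ := by
    intro w hw u hu
    have hvnorm : ‖(μ2⁻¹) • A v2‖ = 1 := by
      rw [norm_smul, nw2, norm_inv, Real.norm_eq_abs, abs_of_pos hμ2]
      field_simp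
    have h := hcvc ((μ2⁻¹) • A v2) (Submodule.smul_mem _ _ Ww2) hvnorm
      w (Submodule.mem_sup_left hw)
      (by rw [real_inner_smul_right, horth w hw _ hw2mem, mul_zero])
      (by rw [map_smul, real_inner_smul_right, horth w hw _ hAw2mem, mul_zero])
      u hu
    simp only [map_smul, LinearMap.smul_apply, smul_eq_mul] at h
    have hμ2' : μ2 ≠ 0 := hμ2.ne'
    field_simp at h
    linear_combination h
  have hRsub : ∀ X Y Z W U : V, R (X - Y) Z W U = R X Z W U - R Y Z W U := by
    intro X Y Z W U
    have h := congrArg (fun T => T Z W U) (map_add R (X - Y) Y)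
    simp only [sub_add_cancel, LinearMap.add_apply] at h
    linarith
  -- mixed instance with v = (v1+v2)/√2
  have hs2pos : (0:ℝ) < Real.sqrt 2 := Real.sqrt_pos.mpr (by norm_num)
  have hn12 : ‖v1 + v2‖ = Real.sqrt 2 := by
    have h2 : ‖v1 + v2‖ ^ 2 = 2 := by
      rw [norm_add_sq_real, hv1u, hv2u, iv1v2]; ring
    rw [← Real.sqrt_sq (norm_nonneg (v1 + v2)), h2]
  have I5 : ∀ u ∈ σ1 ⊔ σ2,
      R ((μ2 ^ 2) • A v1 - (μ1 ^ 2) • A v2) (v1 + v2) (v1 + v2) u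
        = 2 * ⟪(μ2 ^ 2) • A v1 - (μ1 ^ 2) • A v2, u⟫ := by
    intro u hu
    have hwW : (μ2 ^ 2) • A v1 - (μ1 ^ 2) • A v2 ∈ σ1 ⊔ σ2 :=
      sub_mem (Submodule.smul_mem _ _ Ww1) (Submodule.smul_mem _ _ Ww2)
    have hvW : (Real.sqrt 2)⁻¹ • (v1 + v2) ∈ σ1 ⊔ σ2 :=
      Submodule.smul_mem _ _ (add_mem Wv1 Wv2)
    have hvn : ‖(Real.sqrt 2)⁻¹ • (v1 + v2)‖ = 1 := by
      rw [norm_smul, hn12, norm_inv, Real.norm_eq_abs, abs_of_pos hs2pos]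
      field_simp
    have hwv : ⟪(μ2 ^ 2) • A v1 - (μ1 ^ 2) • A v2, (Real.sqrt 2)⁻¹ • (v1 + v2)⟫ = 0 := by
      simp only [inner_sub_left, real_inner_smul_left, real_inner_smul_right,
        inner_add_right, iw1v1, iw1v2, iw2v1, iw2v2]
      ring
    have hwAv : ⟪(μ2 ^ 2) • A v1 - (μ1 ^ 2) • A v2, A ((Real.sqrt 2)⁻¹ • (v1 + v2))⟫ = 0 := by
      rw [map_smul, map_add]
      simp only [inner_sub_left, real_inner_smul_left, real_inner_smul_right,
        inner_add_right, iw1w1, iw1w2, iw2w1, iw2w2]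
      ring
    have h := hcvc ((Real.sqrt 2)⁻¹ • (v1 + v2)) hvW hvn
      ((μ2 ^ 2) • A v1 - (μ1 ^ 2) • A v2) hwW hwv hwAv u hu
    simp only [map_smul, LinearMap.smul_apply, smul_eq_mul] at h
    have hs2 : Real.sqrt 2 ≠ 0 := hs2pos.ne'
    field_simp at h
    rw [Real.sq_sqrt (by norm_num : (0:ℝ) ≤ 2)] at h
    simp only [hRsub, map_sub, map_smul, map_add, LinearMap.sub_apply, LinearMap.smul_apply,
      LinearMap.add_apply, smul_eq_mul] at h ⊢
    linear_combination h
  -- atom values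
  have t1111 : R v1 (A v1) (A v1) v1 = lam1 * μ1 ^ 2 := hlam1 v1 hv1 hv1u
  have t2222 : R v2 (A v2) (A v2) v2 = lam2 * μ2 ^ 2 := hlam2 v2 hv2 hv2u
  have t2111 : R v2 (A v1) (A v1) v1 = 0 := by rw [I2 v2 hv2 v1 Wv1, iv2v1, mul_zero]
  have t1112 : R v1 (A v1) (A v1) v2 = 0 := by rw [hswap]; exact t2111
  have t1121 : R v1 (A v1) (A v2) v1 = 0 := by
    rw [hpair, I1 _ hw2mem _ Ww1, iw2w1]
  have t1211 : R v1 (A v2) (A v1) v1 = 0 := by rw [hswap]; exact t1121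
  have t1222 : R v1 (A v2) (A v2) v2 = 0 := by rw [I4 v1 hv1 v2 Wv2, iv1v2, mul_zero]
  have t2221 : R v2 (A v2) (A v2) v1 = 0 := by rw [hswap]; exact t1222
  have t2212 : R v2 (A v2) (A v1) v2 = 0 := by
    rw [hpair, I3 _ hw1mem _ Ww2, iw1w2]
  have t2122 : R v2 (A v1) (A v2) v2 = 0 := by rw [hswap]; exact t2212
  have t1221 : R v1 (A v2) (A v2) v1 = μ2 ^ 2 := by
    rw [I4 v1 hv1 v1 Wv1, iv1v1, mul_one]
  have t2112 : R v2 (A v1) (A v1) v2 = μ1 ^ 2 := by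
    rw [I2 v2 hv2 v2 Wv2, iv2v2, mul_one]
  have t2121 : R v2 (A v1) (A v2) v1 = R v1 (A v2) (A v1) v2 := hswap _ _ _ _
  have t2211 : R v2 (A v2) (A v1) v1 = R v1 (A v1) (A v2) v2 := hswap _ _ _ _
  -- the two equations from I5
  have s1 : R (A v1) v1 v1 (A v1) = lam1 * μ1 ^ 2 := by rw [hflip]; exact t1111
  have s2 : R (A v1) v1 v2 (A v1) = 0 := by rw [hpair]; exact t2111
  have s3 : R (A v1) v2 v1 (A v1) = 0 := by rw [hpair]; exact t1112
  have s4 : R (A v1) v2 v2 (A v1) = μ1 ^ 2 := by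
    rw [I3 _ hw1mem _ Ww1, iw1w1]
  have s5 : R (A v2) v1 v1 (A v1) = 0 := by rw [I1 _ hw2mem _ Ww1, iw2w1]
  have s6 : R (A v2) v1 v2 (A v1) = R v1 (A v2) (A v1) v2 := by
    rw [hpair]; exact t2121
  have s7 : R (A v2) v2 v1 (A v1) = R v1 (A v1) (A v2) v2 := by
    rw [hpair]
  have s8 : R (A v2) v2 v2 (A v1) = 0 := by rw [hflip]; exact t2212
  have r1 : R (A v1) v1 v1 (A v2) = 0 := by rw [hswap]; exact s5
  have r2 : R (A v1) v1 v2 (A v2) = R v1 (A v1) (A v2) v2 := by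
    rw [hpair]; exact t2211
  have r3 : R (A v1) v2 v1 (A v2) = R v1 (A v2) (A v1) v2 := by rw [hpair]
  have r4 : R (A v1) v2 v2 (A v2) = 0 := by rw [I3 _ hw1mem _ Ww2, iw1w2]
  have r5 : R (A v2) v1 v1 (A v2) = μ2 ^ 2 := by rw [I1 _ hw2mem _ Ww2, iw2w2]
  have r6 : R (A v2) v1 v2 (A v2) = 0 := by rw [hpair]; exact t2221
  have r7 : R (A v2) v2 v1 (A v2) = 0 := by rw [hpair]; exact t1222
  have r8 : R (A v2) v2 v2 (A v2) = lam2 * μ2 ^ 2 := by rw [hflip]; exact t2222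
  have eqA := I5 (A v1) Ww1
  have eqB := I5 (A v2) Ww2
  simp only [hRsub, map_sub, map_smul, map_add, LinearMap.sub_apply, LinearMap.smul_apply,
    LinearMap.add_apply, smul_eq_mul, inner_sub_left, real_inner_smul_left,
    iw1w1, iw1w2, iw2w1, iw2w2] at eqA eqB
  rw [s1, s2, s3, s4, s5, s6, s7, s8] at eqA
  rw [r1, r2, r3, r4, r5, r6, r7, r8] at eqB
  have hPQ1 : R v1 (A v1) (A v2) v2 + R v1 (A v2) (A v1) v2 = μ2 ^ 2 * lam1 - μ2 ^ 2 := by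
    have hc : μ1 ^ 2 * (R v1 (A v1) (A v2) v2 + R v1 (A v2) (A v1) v2)
        = μ1 ^ 2 * (μ2 ^ 2 * lam1 - μ2 ^ 2) := by linear_combination -eqA
    exact mul_left_cancel₀ (pow_ne_zero 2 hμ1.ne') hc
  have hPQ2 : R v1 (A v1) (A v2) v2 + R v1 (A v2) (A v1) v2 = μ1 ^ 2 * lam2 - μ1 ^ 2 := by
    have hc : μ2 ^ 2 * (R v1 (A v1) (A v2) v2 + R v1 (A v2) (A v1) v2)
        = μ2 ^ 2 * (μ1 ^ 2 * lam2 - μ1 ^ 2) := by linear_combination eqB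
    exact mul_left_cancel₀ (pow_ne_zero 2 hμ2.ne') hc
  -- denominator
  have hAv : A (a • v1 + b • v2) = a • A v1 + b • A v2 := by
    rw [map_add, map_smul, map_smul]
  have hD : (0:ℝ) < a ^ 2 * μ1 ^ 2 + b ^ 2 * μ2 ^ 2 := by
    have h1 : (0:ℝ) ≤ a ^ 2 * μ1 ^ 2 := by positivity
    have h2 : (0:ℝ) ≤ b ^ 2 * μ2 ^ 2 := by positivity
    rcases eq_or_ne a 0 with ha | ha
    · have hb : b ≠ 0 := by
        intro hb; rw [ha, hb] at hab; norm_num at hab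
      have hb2 : (0:ℝ) < b ^ 2 := by
        rw [← sq_abs]; exact pow_pos (abs_pos.mpr hb) 2
      exact add_pos_of_nonneg_of_pos h1 (mul_pos hb2 (pow_pos hμ2 2))
    · have ha2 : (0:ℝ) < a ^ 2 := by
        rw [← sq_abs]; exact pow_pos (abs_pos.mpr ha) 2
      exact add_pos_of_pos_of_nonneg (mul_pos ha2 (pow_pos hμ1 2)) h2
  have hnorm : ‖A (a • v1 + b • v2)‖ ^ 2 = a ^ 2 * μ1 ^ 2 + b ^ 2 * μ2 ^ 2 := by
    rw [hAv, norm_add_sq_real, norm_smul, norm_smul, real_inner_smul_left,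
      real_inner_smul_right, iw1w2, nw1, nw2, Real.norm_eq_abs, Real.norm_eq_abs,
      mul_pow, mul_pow, sq_abs, sq_abs]
    ring
  rw [hnorm, hAv, div_eq_iff hD.ne']
  simp only [map_add, map_smul, LinearMap.add_apply, LinearMap.smul_apply, smul_eq_mul]
  rw [t1111, t2222, t2111, t1112, t1121, t1211, t1222, t2221, t2212, t2122,
    t1221, t2112, t2121, t2211]
  linear_combination (a ^ 2 * b ^ 2) * hPQ1 + (a ^ 2 * b ^ 2) * hPQ2
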